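/- Let m ≥ 1 be an integer and let G be a graph in which every vertex set B with |B| ≥ m satisfies |N_G(B) ∪ B| ≥ 6m. Then there exists a set A of vertices with |A| < m such that in the induced subgraph G' = G − A, every nonempty vertex set X with |X| ≤ m satisfies |N_{G'}(X)| > 2|X|. -/

import Mathlib

open SimpleGraph

/-- `N_G(S)`: the set of vertices outside `S` having a neighbour in `S`. -/
def setNbhd {V : Type*} (G : SimpleGraph V) (S : Set V) : Set V :=
  {v | v ∉ S ∧ ∃ s ∈ S, G.Adj v s}

/-- If every vertex set `B` with `|B| ≥ m` satisfies `|N_G(B) ∪ B| ≥ 6m`, then there is a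
set `A` with `|A| < m` such that in `G' = G - A` every nonempty set `X` with `|X| ≤ m`
satisfies `|N_{G'}(X)| > 2|X|`. -/
theorem stmt14 {V : Type*} [Fintype V] (m : ℕ) (hm : 1 ≤ m) (G : SimpleGraph V)
    (hexp : ∀ B : Set V, m ≤ B.ncard → 6 * m ≤ (setNbhd G B ∪ B).ncard) :
    ∃ A : Set V, A.ncard < m ∧
      ∀ X : Set V, X.Nonempty → X ⊆ Aᶜ → X.ncard ≤ m →
        2 * X.ncard < {v : V | v ∉ A ∧ v ∉ X ∧ ∃ x ∈ X, G.Adj v x}.ncard := by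
  by_contra hcon
  push_neg at hcon
  have key : ∀ k : ℕ, ∀ A : Set V, A.ncard < m → m - A.ncard ≤ k →
      (setNbhd G A ∪ A).ncard ≤ 3 * A.ncard → False := by
    intro k
    induction k with
    | zero => intro A hA hk _; omega
    | succ k ih =>
      intro A hA hk hbound
      obtain ⟨X, hXne, hXsub, hXm, hXbad⟩ := hcon A hA
      have hdisj : Disjoint A X := Set.disjoint_left.mpr fun a ha hx => (hXsub hx) ha
      have hcardU : (A ∪ X).ncard = A.ncard + X.ncard :=
        Set.ncard_union_eq hdisj (Set.toFinite _) (Set.toFinite _)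
      have hXpos : 1 ≤ X.ncard :=
        (Set.ncard_pos (Set.toFinite _)).mpr hXne
      have hsub : setNbhd G (A ∪ X) ∪ (A ∪ X) ⊆
          ((setNbhd G A ∪ A) ∪ X) ∪ {v : V | v ∉ A ∧ v ∉ X ∧ ∃ x ∈ X, G.Adj v x} := by
        rintro v (⟨hv, s, hs, hadj⟩ | hv | hv)
        · rcases hs with hs | hs
          · exact Or.inl (Or.inl (Or.inl ⟨fun h => hv (Or.inl h), s, hs, hadj⟩))
          · exact Or.inr ⟨fun h => hv (Or.inl h), fun h => hv (Or.inr h), s, hs, hadj⟩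
        · exact Or.inl (Or.inl (Or.inr hv))
        · exact Or.inl (Or.inr hv)
      have hb2 : (setNbhd G (A ∪ X) ∪ (A ∪ X)).ncard ≤ 3 * (A ∪ X).ncard := by
        calc (setNbhd G (A ∪ X) ∪ (A ∪ X)).ncard
            ≤ (((setNbhd G A ∪ A) ∪ X) ∪
                {v : V | v ∉ A ∧ v ∉ X ∧ ∃ x ∈ X, G.Adj v x}).ncard :=
              Set.ncard_le_ncard hsub (Set.toFinite _)
          _ ≤ ((setNbhd G A ∪ A) ∪ X).ncard +
                {v : V | v ∉ A ∧ v ∉ X ∧ ∃ x ∈ X, G.Adj v x}.ncard :=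
              Set.ncard_union_le _ _
          _ ≤ ((setNbhd G A ∪ A).ncard + X.ncard) + 2 * X.ncard :=
              Nat.add_le_add (Set.ncard_union_le _ _) hXbad
          _ ≤ 3 * (A ∪ X).ncard := by omega
      by_cases hcase : (A ∪ X).ncard < m
      · exact ih (A ∪ X) hcase (by omega) hb2
      · have h6 := hexp (A ∪ X) (by omega)
        omega
  have h0 : (setNbhd G (∅ : Set V) ∪ ∅).ncard ≤ 3 * (∅ : Set V).ncard := by
    simp [setNbhd]
  exact key m ∅ (by simp; omega) (by simp) h0
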